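/- arXiv:2406.19710 — 5 statements merged into one kernel-verified Lean document; each statement's English description precedes it below -/
import Mathlib

section
/- Let m = 2^{k-2}, n = 4m - 1 for k ≥ 3, let O be a 2m-element subset of [n], let X be a family of 2m-1 many m-element subsets of [n]∖O with pairwise intersections of size m/2, let Z be a (2m-1)-element subset of O, let Y be a family of 2m-1 many m-element subsets of Z with pairwise intersections of size m/2, and let δ : X → Y be a bijection. Then the family consisting of O together with the sets X ∪ δ(X) and X ∪ (O ∖ δ(X)) for X ∈ X has exactly n elements, and any two distinct members intersect in exactly m elements. -/
open Finset

theorem stmt_6 (k m n : ℕ) (hk : 3 ≤ k) (hm : m = 2 ^ (k - 2)) (hn : n = 4 * m - 1)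
    (O : Finset (Fin n)) (hO : O.card = 2 * m)
    (𝒳 : Finset (Finset (Fin n)))
    (h𝒳card : 𝒳.card = 2 * m - 1)
    (h𝒳 : ∀ X ∈ 𝒳, X.card = m ∧ Disjoint X O)
    (h𝒳int : ∀ X₁ ∈ 𝒳, ∀ X₂ ∈ 𝒳, X₁ ≠ X₂ → (X₁ ∩ X₂).card = m / 2)
    (Z : Finset (Fin n)) (hZO : Z ⊆ O) (hZcard : Z.card = 2 * m - 1)
    (𝒴 : Finset (Finset (Fin n)))
    (h𝒴card : 𝒴.card = 2 * m - 1)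
    (h𝒴 : ∀ Y ∈ 𝒴, Y.card = m ∧ Y ⊆ Z)
    (h𝒴int : ∀ Y₁ ∈ 𝒴, ∀ Y₂ ∈ 𝒴, Y₁ ≠ Y₂ → (Y₁ ∩ Y₂).card = m / 2)
    (δ : Finset (Fin n) → Finset (Fin n))
    (hδ : Set.BijOn δ ↑𝒳 ↑𝒴) :
    let 𝒞 : Finset (Finset (Fin n)) :=
      insert O ((𝒳.image fun X => X ∪ δ X) ∪ (𝒳.image fun X => X ∪ (O \ δ X)))
    𝒞.card = n ∧ ∀ A ∈ 𝒞, ∀ B ∈ 𝒞, A ≠ B → (A ∩ B).card = m := by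
  intro 𝒞
  have hm2 : m = 2 * 2 ^ (k - 3) := by
    subst hm
    rw [← pow_succ']
    congr 1
    omega
  set p := 2 ^ (k - 3) with hpdef
  have hppos : 0 < p := Nat.pow_pos (by norm_num)
  have hmp : m = p + p := by omega
  have hm2' : m / 2 = p := by omega
  -- basic facts
  have hXd : ∀ X ∈ 𝒳, Disjoint X O := fun X hX => (h𝒳 X hX).2
  have hXc : ∀ X ∈ 𝒳, X.card = m := fun X hX => (h𝒳 X hX).1
  have hδmem : ∀ X ∈ 𝒳, δ X ∈ 𝒴 := fun X hX => hδ.mapsTo hX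
  have hδsub : ∀ X ∈ 𝒳, δ X ⊆ O := fun X hX => ((h𝒴 _ (hδmem X hX)).2).trans hZO
  have hδc : ∀ X ∈ 𝒳, (δ X).card = m := fun X hX => (h𝒴 _ (hδmem X hX)).1
  have hδinj : ∀ X₁ ∈ 𝒳, ∀ X₂ ∈ 𝒳, δ X₁ = δ X₂ → X₁ = X₂ := fun X₁ h1 X₂ h2 h =>
    hδ.injOn h1 h2 h
  -- recovery lemmas
  have hrec1 : ∀ X ∈ 𝒳, (X ∪ δ X) \ O = X := by
    intro X hX
    have h1 := fun a (ha : a ∈ X) => Finset.disjoint_left.mp (hXd X hX) ha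
    have h2 := fun a (ha : a ∈ δ X) => hδsub X hX ha
    ext a
    simp only [mem_sdiff, mem_union]
    constructor
    · rintro ⟨h | h, hO⟩
      · exact h
      · exact absurd (h2 a h) hO
    · intro h; exact ⟨Or.inl h, h1 a h⟩
  have hrec2 : ∀ X ∈ 𝒳, (X ∪ (O \ δ X)) \ O = X := by
    intro X hX
    have h1 := fun a (ha : a ∈ X) => Finset.disjoint_left.mp (hXd X hX) ha
    ext a
    simp only [mem_sdiff, mem_union]
    constructor
    · rintro ⟨h | h, hO⟩
      · exact h
      · exact absurd h.1 hO
    · intro h; exact ⟨Or.inl h, h1 a h⟩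
  -- the key counting lemma
  have key : ∀ X₁ X₂ Y₁ Y₂ : Finset (Fin n), Disjoint X₁ O → Disjoint X₂ O →
      Y₁ ⊆ O → Y₂ ⊆ O →
      ((X₁ ∪ Y₁) ∩ (X₂ ∪ Y₂)).card = (X₁ ∩ X₂).card + (Y₁ ∩ Y₂).card := by
    intro X₁ X₂ Y₁ Y₂ h1 h2 h3 h4
    have hset : (X₁ ∪ Y₁) ∩ (X₂ ∪ Y₂) = (X₁ ∩ X₂) ∪ (Y₁ ∩ Y₂) := by
      ext a
      have h1' := fun (ha : a ∈ X₁) => Finset.disjoint_left.mp h1 ha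
      have h2' := fun (ha : a ∈ X₂) => Finset.disjoint_left.mp h2 ha
      have h3' := fun (ha : a ∈ Y₁) => h3 ha
      have h4' := fun (ha : a ∈ Y₂) => h4 ha
      simp only [mem_inter, mem_union]
      tauto
    rw [hset, Finset.card_union_of_disjoint]
    exact h1.mono Finset.inter_subset_left (Finset.inter_subset_left.trans h3)
  -- intersections with O
  have interO : ∀ X Y : Finset (Fin n), Disjoint X O → Y ⊆ O →
      (O ∩ (X ∪ Y)).card = Y.card := by
    intro X Y h1 h2
    have : O ∩ (X ∪ Y) = Y := by
      ext a
      have h1' := fun (ha : a ∈ X) => Finset.disjoint_left.mp h1 ha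
      have h2' := fun (ha : a ∈ Y) => h2 ha
      simp only [mem_inter, mem_union]
      tauto
    rw [this]
  have hYOcard : ∀ X ∈ 𝒳, (O \ δ X).card = m := by
    intro X hX
    rw [Finset.card_sdiff_of_subset (hδsub X hX), hO, hδc X hX]
    omega
  -- pairwise δ-intersections
  have hδint : ∀ X₁ ∈ 𝒳, ∀ X₂ ∈ 𝒳, X₁ ≠ X₂ → (δ X₁ ∩ δ X₂).card = p := by
    intro X₁ h1 X₂ h2 hne
    rw [← hm2']
    exact h𝒴int _ (hδmem X₁ h1) _ (hδmem X₂ h2)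
      (fun h => hne (hδinj X₁ h1 X₂ h2 h))
  have hXint : ∀ X₁ ∈ 𝒳, ∀ X₂ ∈ 𝒳, X₁ ≠ X₂ → (X₁ ∩ X₂).card = p := by
    intro X₁ h1 X₂ h2 hne
    rw [← hm2']
    exact h𝒳int X₁ h1 X₂ h2 hne
  -- δX ∩ (O \ δX')
  have hmix : ∀ X₁ ∈ 𝒳, ∀ X₂ ∈ 𝒳, δ X₁ ∩ (O \ δ X₂) = δ X₁ \ δ X₂ := by
    intro X₁ h1 X₂ h2
    ext a
    have h' := fun (ha : a ∈ δ X₁) => hδsub X₁ h1 ha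
    simp only [mem_inter, mem_sdiff]
    tauto
  have hmixcard : ∀ X₁ ∈ 𝒳, ∀ X₂ ∈ 𝒳, X₁ ≠ X₂ → (δ X₁ ∩ (O \ δ X₂)).card = p := by
    intro X₁ h1 X₂ h2 hne
    rw [hmix X₁ h1 X₂ h2]
    have := Finset.card_sdiff_add_card_inter (δ X₁) (δ X₂)
    have h3 := hδint X₁ h1 X₂ h2 hne
    have h4 := hδc X₁ h1
    omega
  have hcomp : ∀ X₁ ∈ 𝒳, ∀ X₂ ∈ 𝒳, X₁ ≠ X₂ → ((O \ δ X₁) ∩ (O \ δ X₂)).card = p := by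
    intro X₁ h1 X₂ h2 hne
    have hset : (O \ δ X₁) ∩ (O \ δ X₂) = O \ (δ X₁ ∪ δ X₂) := by
      ext a
      simp only [mem_inter, mem_sdiff, mem_union]
      tauto
    rw [hset, Finset.card_sdiff_of_subset (Finset.union_subset (hδsub X₁ h1) (hδsub X₂ h2))]
    have := Finset.card_union_add_card_inter (δ X₁) (δ X₂)
    have h3 := hδint X₁ h1 X₂ h2 hne
    have h4 := hδc X₁ h1
    have h5 := hδc X₂ h2
    omega
  -- membership characterization
  have hmem : ∀ A, A ∈ 𝒞 ↔ O = A ∨ (∃ X ∈ 𝒳, X ∪ δ X = A) ∨ (∃ X ∈ 𝒳, X ∪ (O \ δ X) = A) := by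
    intro A
    simp only [𝒞, Finset.mem_insert, Finset.mem_union, Finset.mem_image]
    constructor
    · rintro (h | h)
      exacts [Or.inl h.symm, Or.inr h]
    · rintro (h | h)
      exacts [Or.inl h.symm, Or.inr h]
  -- the two image families
  have hOnot : O ∉ (𝒳.image fun X => X ∪ δ X) ∪ (𝒳.image fun X => X ∪ (O \ δ X)) := by
    intro h
    simp only [Finset.mem_union, Finset.mem_image] at h
    have : ∃ X ∈ 𝒳, X ⊆ O := by
      rcases h with ⟨X, hX, hE⟩ | ⟨X, hX, hE⟩
      · exact ⟨X, hX, hE ▸ Finset.subset_union_left⟩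
      · exact ⟨X, hX, hE ▸ Finset.subset_union_left⟩
    obtain ⟨X, hX, hsub⟩ := this
    have hne : X.Nonempty := Finset.card_pos.mp (by rw [hXc X hX]; omega)
    obtain ⟨a, ha⟩ := hne
    exact Finset.disjoint_left.mp (hXd X hX) ha (hsub ha)
  have hdisj12 : Disjoint (𝒳.image fun X => X ∪ δ X) (𝒳.image fun X => X ∪ (O \ δ X)) := by
    rw [Finset.disjoint_left]
    intro A hA hB
    simp only [Finset.mem_image] at hA hB
    obtain ⟨X₁, h1, e1⟩ := hA
    obtain ⟨X₂, h2, e2⟩ := hB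
    have hXX : X₁ = X₂ := by
      have := congrArg (· \ O) (e1.trans e2.symm)
      simpa [hrec1 X₁ h1, hrec2 X₂ h2] using this
    subst hXX
    have hE : X₁ ∪ δ X₁ = X₁ ∪ (O \ δ X₁) := e1.trans e2.symm
    have hne : (δ X₁).Nonempty := Finset.card_pos.mp (by rw [hδc X₁ h1]; omega)
    obtain ⟨a, ha⟩ := hne
    have haO : a ∈ O := hδsub X₁ h1 ha
    have : a ∈ X₁ ∪ (O \ δ X₁) := hE ▸ Finset.mem_union_right _ ha
    rcases Finset.mem_union.mp this with h | h
    · exact Finset.disjoint_left.mp (hXd X₁ h1) h haO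
    · exact (Finset.mem_sdiff.mp h).2 ha
  constructor
  · -- cardinality
    rw [show 𝒞 = insert O ((𝒳.image fun X => X ∪ δ X) ∪ (𝒳.image fun X => X ∪ (O \ δ X))) from rfl]
    rw [Finset.card_insert_of_notMem hOnot, Finset.card_union_of_disjoint hdisj12]
    rw [Finset.card_image_of_injOn, Finset.card_image_of_injOn, h𝒳card]
    · omega
    · intro X₁ h1 X₂ h2 hE
      have := congrArg (· \ O) hE
      simpa [hrec2 X₁ h1, hrec2 X₂ h2] using this
    · intro X₁ h1 X₂ h2 hE
      have := congrArg (· \ O) hE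
      simpa [hrec1 X₁ h1, hrec1 X₂ h2] using this
  · -- pairwise intersections
    intro A hA B hB hAB
    rw [hmem] at hA hB
    rcases hA with rfl | ⟨X₁, h1, rfl⟩ | ⟨X₁, h1, rfl⟩ <;>
      rcases hB with rfl | ⟨X₂, h2, rfl⟩ | ⟨X₂, h2, rfl⟩
    · exact absurd rfl hAB
    · rw [interO X₂ (δ X₂) (hXd X₂ h2) (hδsub X₂ h2)]
      exact hδc X₂ h2
    · rw [interO X₂ (O \ δ X₂) (hXd X₂ h2) Finset.sdiff_subset]
      exact hYOcard X₂ h2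
    · rw [Finset.inter_comm, interO X₁ (δ X₁) (hXd X₁ h1) (hδsub X₁ h1)]
      exact hδc X₁ h1
    · -- X₁ ∪ δX₁ vs X₂ ∪ δX₂
      have hne : X₁ ≠ X₂ := fun h => hAB (by rw [h])
      rw [key X₁ X₂ (δ X₁) (δ X₂) (hXd X₁ h1) (hXd X₂ h2) (hδsub X₁ h1) (hδsub X₂ h2),
        hXint X₁ h1 X₂ h2 hne, hδint X₁ h1 X₂ h2 hne]
      omega
    · -- X₁ ∪ δX₁ vs X₂ ∪ (O \ δX₂)
      rw [key X₁ X₂ (δ X₁) (O \ δ X₂) (hXd X₁ h1) (hXd X₂ h2) (hδsub X₁ h1) Finset.sdiff_subset]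
      by_cases hne : X₁ = X₂
      · subst hne
        rw [Finset.inter_self, hXc X₁ h1, hmix X₁ h1 X₁ h1, Finset.sdiff_self]
        simp
      · rw [hXint X₁ h1 X₂ h2 hne, hmixcard X₁ h1 X₂ h2 hne]
        omega
    · rw [Finset.inter_comm, interO X₁ (O \ δ X₁) (hXd X₁ h1) Finset.sdiff_subset]
      exact hYOcard X₁ h1
    · -- X₁ ∪ (O \ δX₁) vs X₂ ∪ δX₂
      rw [key X₁ X₂ (O \ δ X₁) (δ X₂) (hXd X₁ h1) (hXd X₂ h2) Finset.sdiff_subset (hδsub X₂ h2)]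
      by_cases hne : X₁ = X₂
      · subst hne
        rw [Finset.inter_self, hXc X₁ h1, Finset.inter_comm, hmix X₁ h1 X₁ h1,
          Finset.sdiff_self]
        simp
      · rw [hXint X₁ h1 X₂ h2 hne, Finset.inter_comm, hmixcard X₂ h2 X₁ h1 (Ne.symm hne)]
        omega
    · -- X₁ ∪ (O \ δX₁) vs X₂ ∪ (O \ δX₂)
      have hne : X₁ ≠ X₂ := fun h => hAB (by rw [h])
      rw [key X₁ X₂ (O \ δ X₁) (O \ δ X₂) (hXd X₁ h1) (hXd X₂ h2) Finset.sdiff_subset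
        Finset.sdiff_subset, hXint X₁ h1 X₂ h2 hne, hcomp X₁ h1 X₂ h2 hne]
      omega
end

section
/- Under the hypotheses of the previous setup, for distinct C, C̃ ∈ C ∖ {O} with C̃ ∉ {C, O △ C}, one has |X_C̃ ∩ X_C| = |Y_C̃ ∩ Y_C| = |Y_C̃ ∩ (O ∖ Y_C)| = m/2. -/
theorem stmt_10 (m : ℕ) (hm : Even m)
    (𝒞 : Finset (Finset (Fin (4 * m - 1))))
    (hcard : ∀ C ∈ 𝒞, C.card = 2 * m)
    (hint : ∀ C₁ ∈ 𝒞, ∀ C₂ ∈ 𝒞, C₁ ≠ C₂ → (C₁ ∩ C₂).card = m)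
    (O : Finset (Fin (4 * m - 1))) (hO : O ∈ 𝒞)
    (hcenter : ∀ C ∈ 𝒞, C ≠ O → symmDiff O C ∈ 𝒞) :
    ∀ C ∈ 𝒞, ∀ C' ∈ 𝒞, C ≠ O → C' ≠ O → C' ≠ C → C' ≠ symmDiff O C →
      ((C' \ O) ∩ (C \ O)).card = m / 2 ∧
      ((C' ∩ O) ∩ (C ∩ O)).card = m / 2 ∧
      ((C' ∩ O) ∩ (O \ (C ∩ O))).card = m / 2 := by
  intro C hC C' hC' hCO hC'O hC'C hC'D
  obtain ⟨k, hk⟩ := hm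
  have hD : symmDiff O C ∈ 𝒞 := hcenter C hC hCO
  set a := (C' ∩ C ∩ O).card with ha
  set b := ((C' ∩ C) \ O).card with hb
  set c := ((C' ∩ O) \ C).card with hc
  have h1 : a + b = m := by
    have := Finset.card_inter_add_card_sdiff (C' ∩ C) O
    rw [this]
    exact hint C' hC' C hC hC'C
  have h2 : a + c = m := by
    have := Finset.card_inter_add_card_sdiff (C' ∩ O) C
    have heq : C' ∩ O ∩ C = C' ∩ C ∩ O := by
      ext x; simp only [Finset.mem_inter]; tauto
    rw [heq] at this
    rw [this]
    exact hint C' hC' O hO hC'O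
  have h3 : b + c = m := by
    have hunion : C' ∩ symmDiff O C = ((C' ∩ C) \ O) ∪ ((C' ∩ O) \ C) := by
      ext x
      simp only [Finset.mem_inter, Finset.mem_union, Finset.mem_sdiff,
        Finset.mem_symmDiff]
      tauto
    have hdisj : Disjoint ((C' ∩ C) \ O) ((C' ∩ O) \ C) := by
      rw [Finset.disjoint_left]
      intro x hx hx'
      simp only [Finset.mem_sdiff, Finset.mem_inter] at hx hx'
      tauto
    have := hint C' hC' (symmDiff O C) hD hC'D
    rw [hunion, Finset.card_union_of_disjoint hdisj] at this
    exact this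
  refine ⟨?_, ?_, ?_⟩
  · have heq : (C' \ O) ∩ (C \ O) = (C' ∩ C) \ O := by
      ext x
      simp only [Finset.mem_inter, Finset.mem_sdiff]
      tauto
    rw [heq]; omega
  · have heq : (C' ∩ O) ∩ (C ∩ O) = C' ∩ C ∩ O := by
      ext x
      simp only [Finset.mem_inter]
      tauto
    rw [heq]; omega
  · have heq : (C' ∩ O) ∩ (O \ (C ∩ O)) = (C' ∩ O) \ C := by
      ext x
      simp only [Finset.mem_inter, Finset.mem_sdiff]
      tauto
    rw [heq]; omega
end

section
/- Let C be a centered (4m-1)-element clique with center O as above. Then the family X = {C ∖ O : C ∈ C, C ≠ O} consists of exactly 2m - 1 distinct m-element subsets of [4m-1] ∖ O, any two of which intersect in exactly m/2 elements. -/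
theorem stmt_11 (k m : ℕ) (hk : 3 ≤ k) (hm : m = 2 ^ (k - 2))
    (𝒞 : Finset (Finset (Fin (4 * m - 1))))
    (h𝒞card : 𝒞.card = 4 * m - 1)
    (hcard : ∀ C ∈ 𝒞, C.card = 2 * m)
    (hint : ∀ C₁ ∈ 𝒞, ∀ C₂ ∈ 𝒞, C₁ ≠ C₂ → (C₁ ∩ C₂).card = m)
    (O : Finset (Fin (4 * m - 1))) (hO : O ∈ 𝒞)
    (hcenter : ∀ C ∈ 𝒞, C ≠ O → symmDiff O C ∈ 𝒞) :
    let 𝒳 : Finset (Finset (Fin (4 * m - 1))) := (𝒞.erase O).image (fun C => C \ O)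
    𝒳.card = 2 * m - 1 ∧
    (∀ X ∈ 𝒳, X.card = m ∧ Disjoint X O) ∧
    (∀ X₁ ∈ 𝒳, ∀ X₂ ∈ 𝒳, X₁ ≠ X₂ → (X₁ ∩ X₂).card = m / 2) := by
  intro 𝒳
  have hm2 : 2 ≤ m := by
    subst hm
    calc 2 = 2 ^ 1 := rfl
    _ ≤ 2 ^ (k - 2) := Nat.pow_le_pow_right (by norm_num) (by omega)
  have hOcard : O.card = 2 * m := hcard O hO
  have hintO : ∀ C ∈ 𝒞, C ≠ O → (C ∩ O).card = m := fun C hC hne => hint C hC O hO hne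
  have hdiff : ∀ C ∈ 𝒞, C ≠ O → (C \ O).card = m := by
    intro C hC hne
    have h1 := Finset.card_inter_add_card_sdiff C O
    have h2 := hintO C hC hne
    have h3 := hcard C hC
    omega
  have hsd : ∀ C : Finset (Fin (4 * m - 1)), (symmDiff O C) \ O = C \ O := by
    intro C
    ext x
    simp only [Finset.mem_sdiff, Finset.mem_symmDiff]
    tauto
  have hsymm_mem : ∀ C ∈ 𝒞, C ≠ O → symmDiff O C ∈ 𝒞.erase O ∧ symmDiff O C ≠ C := by
    intro C hC hne
    have h1 : symmDiff O C ≠ O := by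
      intro h
      have hC0 : C = ∅ := by simpa using symmDiff_eq_left.mp h
      have := hcard C hC
      rw [hC0] at this
      simp at this
      omega
    refine ⟨Finset.mem_erase.mpr ⟨h1, hcenter C hC hne⟩, ?_⟩
    intro h
    have hO0 : O = ∅ := by simpa using symmDiff_eq_right.mp h
    rw [hO0] at hOcard
    simp at hOcard
    omega
  -- key: the map C ↦ C \ O is two-to-one with fibers {C, O ∆ C}
  have hkey : ∀ C₁ ∈ 𝒞, C₁ ≠ O → ∀ C₂ ∈ 𝒞, C₂ ≠ O → C₁ ≠ C₂ → C₁ \ O = C₂ \ O →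
      C₂ = symmDiff O C₁ := by
    intro C₁ hC₁ hC₁ne C₂ hC₂ hC₂ne hne heq
    have hi : C₁ ∩ C₂ = C₁ \ O := by
      have hsub : C₁ \ O ⊆ C₁ ∩ C₂ := by
        intro x hx
        rw [Finset.mem_inter]
        refine ⟨(Finset.mem_sdiff.mp hx).1, ?_⟩
        rw [heq] at hx
        exact (Finset.mem_sdiff.mp hx).1
      have hc1 : (C₁ ∩ C₂).card = m := hint C₁ hC₁ C₂ hC₂ hne
      have hc2 : (C₁ \ O).card = m := hdiff C₁ hC₁ hC₁ne
      exact (Finset.eq_of_subset_of_card_le hsub (by omega)).symm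
    have hO2 : C₂ ∩ O = O \ C₁ := by
      have hsub : C₂ ∩ O ⊆ O \ C₁ := by
        intro x hx
        rw [Finset.mem_inter] at hx
        rw [Finset.mem_sdiff]
        refine ⟨hx.2, fun hxC₁ => ?_⟩
        have : x ∈ C₁ ∩ C₂ := Finset.mem_inter.mpr ⟨hxC₁, hx.1⟩
        rw [hi, Finset.mem_sdiff] at this
        exact this.2 hx.2
      have hc1 : (C₂ ∩ O).card = m := hintO C₂ hC₂ hC₂ne
      have hc2 : (O \ C₁).card = m := by
        have h1 := Finset.card_inter_add_card_sdiff O C₁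
        have h2 : (O ∩ C₁).card = m := by
          rw [Finset.inter_comm]; exact hintO C₁ hC₁ hC₁ne
        omega
      exact Finset.eq_of_subset_of_card_le hsub (by omega)
    ext x
    constructor
    · intro hx
      by_cases hxO : x ∈ O
      · have hmem : x ∈ C₂ ∩ O := Finset.mem_inter.mpr ⟨hx, hxO⟩
        rw [hO2, Finset.mem_sdiff] at hmem
        rw [Finset.mem_symmDiff]
        tauto
      · have hmem : x ∈ C₂ \ O := Finset.mem_sdiff.mpr ⟨hx, hxO⟩
        rw [← heq, Finset.mem_sdiff] at hmem
        rw [Finset.mem_symmDiff]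
        tauto
    · intro hx
      rw [Finset.mem_symmDiff] at hx
      rcases hx with ⟨hxO, hxC₁⟩ | ⟨hxC₁, hxO⟩
      · have hmem : x ∈ O \ C₁ := Finset.mem_sdiff.mpr ⟨hxO, hxC₁⟩
        rw [← hO2] at hmem
        exact (Finset.mem_inter.mp hmem).1
      · have hmem : x ∈ C₁ \ O := Finset.mem_sdiff.mpr ⟨hxC₁, hxO⟩
        rw [heq] at hmem
        exact (Finset.mem_sdiff.mp hmem).1
  refine ⟨?_, ?_, ?_⟩
  · -- cardinality of 𝒳
    have hsum := Finset.card_eq_sum_card_image (fun C => C \ O) (𝒞.erase O)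
    have herase : (𝒞.erase O).card = 4 * m - 2 := by
      rw [Finset.card_erase_of_mem hO, h𝒞card]; omega
    have hfib : ∀ X ∈ 𝒳, ((𝒞.erase O).filter fun C => C \ O = X).card = 2 := by
      intro X hX
      obtain ⟨C₀, hC₀e, hC₀X⟩ := Finset.mem_image.mp hX
      obtain ⟨hC₀ne, hC₀mem⟩ := Finset.mem_erase.mp hC₀e
      obtain ⟨hsm, hsne⟩ := hsymm_mem C₀ hC₀mem hC₀ne
      have hfil : (𝒞.erase O).filter (fun C => C \ O = X) = {C₀, symmDiff O C₀} := by
        ext C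
        simp only [Finset.mem_filter, Finset.mem_insert, Finset.mem_singleton]
        constructor
        · rintro ⟨hCe, hCX⟩
          by_cases h : C = C₀
          · exact Or.inl h
          · exact Or.inr (hkey C₀ hC₀mem hC₀ne C (Finset.mem_erase.mp hCe).2
              (Finset.mem_erase.mp hCe).1 (Ne.symm h) (hC₀X.trans hCX.symm))
        · rintro (rfl | rfl)
          · exact ⟨hC₀e, hC₀X⟩
          · exact ⟨hsm, by rw [hsd, hC₀X]⟩
      rw [hfil, Finset.card_insert_of_notMem (by simpa using hsne.symm),
        Finset.card_singleton]
    rw [hsum, Finset.sum_congr rfl hfib] at herase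
    simp only [Finset.sum_const, smul_eq_mul] at herase
    have : 𝒳.card * 2 = 4 * m - 2 := herase
    omega
  · intro X hX
    obtain ⟨C, hCe, rfl⟩ := Finset.mem_image.mp hX
    obtain ⟨hCne, hC⟩ := Finset.mem_erase.mp hCe
    exact ⟨hdiff C hC hCne, Finset.sdiff_disjoint⟩
  · intro X₁ hX₁ X₂ hX₂ hne
    obtain ⟨C₁, hC₁e, rfl⟩ := Finset.mem_image.mp hX₁
    obtain ⟨C₂, hC₂e, rfl⟩ := Finset.mem_image.mp hX₂
    obtain ⟨hC₁ne, hC₁⟩ := Finset.mem_erase.mp hC₁e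
    obtain ⟨hC₂ne, hC₂⟩ := Finset.mem_erase.mp hC₂e
    have hCne : C₁ ≠ C₂ := by rintro rfl; exact hne rfl
    have h1 : (C₁ ∩ C₂).card = m := hint C₁ hC₁ C₂ hC₂ hCne
    have hsC₂ : symmDiff O C₂ ∈ 𝒞 := hcenter C₂ hC₂ hC₂ne
    have hne2 : C₁ ≠ symmDiff O C₂ := by
      intro h
      exact hne (by rw [h, hsd])
    have h2 : (C₁ ∩ symmDiff O C₂).card = m := hint C₁ hC₁ _ hsC₂ hne2
    have d1 : ((C₁ ∩ C₂) ∩ O).card + ((C₁ ∩ C₂) \ O).card = m := by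
      rw [Finset.card_inter_add_card_sdiff, h1]
    have d2 : ((C₁ ∩ symmDiff O C₂) ∩ O).card + ((C₁ ∩ symmDiff O C₂) \ O).card = m := by
      rw [Finset.card_inter_add_card_sdiff, h2]
    have e1 : (C₁ ∩ C₂) \ O = (C₁ \ O) ∩ (C₂ \ O) := by
      ext x; simp only [Finset.mem_sdiff, Finset.mem_inter]; tauto
    have e2 : (C₁ ∩ symmDiff O C₂) \ O = (C₁ \ O) ∩ (C₂ \ O) := by
      ext x
      simp only [Finset.mem_sdiff, Finset.mem_inter, Finset.mem_symmDiff]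
      tauto
    have e3 : (C₁ ∩ symmDiff O C₂) ∩ O = (C₁ ∩ O) \ C₂ := by
      ext x
      simp only [Finset.mem_sdiff, Finset.mem_inter, Finset.mem_symmDiff]
      tauto
    have e4 : (C₁ ∩ C₂) ∩ O = (C₁ ∩ O) ∩ C₂ := by
      ext x; simp only [Finset.mem_inter]; tauto
    have d3 : ((C₁ ∩ O) ∩ C₂).card + ((C₁ ∩ O) \ C₂).card = m := by
      rw [Finset.card_inter_add_card_sdiff]; exact hintO C₁ hC₁ hC₁ne
    rw [e1, e4] at d1
    rw [e2, e3] at d2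
    omega
end

section
/- Let δ be a bijective transformation of the Fano plane fixing each point of a simplex {P₁,P₂,P₃,P₄}. Then δ permutes the 3-point line L complementary to the simplex, and: if δ|_L is the identity then δ is the identity; if δ|_L is a transposition then δ maps exactly 3 lines to lines; if δ|_L is a 3-cycle then δ maps exactly 1 line to a line. -/
/-- The 7 points of the Fano plane `PG(2,2)`: nonzero vectors of `F_2^3`. -/
def fanoPoints : Finset (Fin 3 → ZMod 2) :=
  Finset.univ.filter (fun v => v ≠ 0)

/-- Lines of the Fano plane: 3-element sets of nonzero vectors summing to `0`
(equivalently, triples `{a, b, a + b}`). -/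
def IsFanoLine (L : Finset (Fin 3 → ZMod 2)) : Prop :=
  L.card = 3 ∧ (0 : Fin 3 → ZMod 2) ∉ L ∧ ∑ v ∈ L, v = 0

instance : DecidablePred IsFanoLine := fun L =>
  decidable_of_iff (L.card = 3 ∧ (0 : Fin 3 → ZMod 2) ∉ L ∧ ∑ v ∈ L, v = 0) Iff.rfl

/-- An (ordered) simplex of the Fano plane: four points, no three collinear. -/
def IsFanoSimplex (X : Fin 4 → (Fin 3 → ZMod 2)) : Prop :=
  (∀ i, X i ≠ 0) ∧ Function.Injective X ∧
    ∀ i j l : Fin 4, i ≠ j → j ≠ l → i ≠ l →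
      ¬ IsFanoLine ({X i, X j, X l} : Finset (Fin 3 → ZMod 2))

/-- The index of a bijective transformation of the Fano plane:
the number of lines mapped onto lines. -/
def fanoIndex (δ : Equiv.Perm (Fin 3 → ZMod 2)) : ℕ :=
  (Finset.univ.filter
    (fun L : Finset (Fin 3 → ZMod 2) => IsFanoLine L ∧ IsFanoLine (L.image δ))).card

abbrev V2 : Type := Fin 3 → ZMod 2

def fcomb (a b c : V2) (z : V2) : V2 := z 0 • a + z 1 • b + z 2 • c

lemma hself (x : V2) : x + x = 0 := by
  funext i
  have : ∀ r : ZMod 2, r + r = 0 := by decide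
  exact this (x i)

lemma heq_of_add (x y : V2) (h : x + y = 0) : x = y := by
  have := neg_eq_of_add_eq_zero_right h
  rw [← this]
  exact (neg_eq_of_add_eq_zero_right (hself x)).symm

lemma fcomb_add (a b c : V2) (x y : V2) : fcomb a b c (x + y) = fcomb a b c x + fcomb a b c y := by
  simp [fcomb, add_smul, Pi.add_apply]
  abel

lemma fcomb_zero (a b c : V2) : fcomb a b c 0 = 0 := by simp [fcomb]

lemma zcases (z : V2) : z = ![0,0,0] ∨ z = ![1,0,0] ∨ z = ![0,1,0] ∨ z = ![0,0,1] ∨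
    z = ![1,1,0] ∨ z = ![1,0,1] ∨ z = ![0,1,1] ∨ z = ![1,1,1] := by
  revert z; decide

section
variable (a b c : V2) (ha : a ≠ 0) (hb : b ≠ 0) (hc : c ≠ 0)
  (hab : a + b ≠ 0) (hac : a + c ≠ 0) (hbc : b + c ≠ 0) (habc : a + b + c ≠ 0)

lemma fv0 : fcomb a b c ![0,0,0] = 0 := by simp [fcomb]
lemma fva : fcomb a b c ![1,0,0] = a := by simp [fcomb]
lemma fvb : fcomb a b c ![0,1,0] = b := by simp [fcomb]
lemma fvc : fcomb a b c ![0,0,1] = c := by simp [fcomb]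
lemma fvab : fcomb a b c ![1,1,0] = a + b := by simp [fcomb]
lemma fvac : fcomb a b c ![1,0,1] = a + c := by simp [fcomb]
lemma fvbc : fcomb a b c ![0,1,1] = b + c := by simp [fcomb]
lemma fvabc : fcomb a b c ![1,1,1] = a + b + c := by simp [fcomb]

include ha hb hc hab hac hbc habc in
lemma fcomb_inj : Function.Injective (fcomb a b c) := by
  intro x y h
  have h0 : fcomb a b c (x + y) = 0 := by rw [fcomb_add, h, hself]
  have hxy : x + y = 0 := by
    rcases zcases (x + y) with hz|hz|hz|hz|hz|hz|hz|hz <;> rw [hz] at h0 ⊢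
    · decide
    · rw [fva] at h0; exact absurd h0 ha
    · rw [fvb] at h0; exact absurd h0 hb
    · rw [fvc] at h0; exact absurd h0 hc
    · rw [fvab] at h0; exact absurd h0 hab
    · rw [fvac] at h0; exact absurd h0 hac
    · rw [fvbc] at h0; exact absurd h0 hbc
    · rw [fvabc] at h0; exact absurd h0 habc
  exact heq_of_add x y hxy

include ha hb hc hab hac hbc habc in
lemma fcomb_bij : Function.Bijective (fcomb a b c) :=
  Finite.injective_iff_bijective.mp (fcomb_inj a b c ha hb hc hab hac hbc habc)

include ha hb hc hab hac hbc habc in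
lemma vcases (x : V2) : x = 0 ∨ x = a ∨ x = b ∨ x = c ∨ x = a+b ∨ x = a+c ∨ x = b+c ∨ x = a+b+c := by
  obtain ⟨z, rfl⟩ := (fcomb_bij a b c ha hb hc hab hac hbc habc).2 x
  rcases zcases z with hz|hz|hz|hz|hz|hz|hz|hz <;> rw [hz] <;>
    simp [fv0, fva, fvb, fvc, fvab, fvac, fvbc, fvabc]

end

section conj
variable (g : Equiv.Perm V2) (hg0 : g 0 = 0) (hgadd : ∀ x y, g (x + y) = g x + g y)

include hg0 hgadd in
lemma line_image (M : Finset V2) : IsFanoLine (M.image g) ↔ IsFanoLine M := by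
  have hgh : ∑ v ∈ M.image g, v = g (∑ v ∈ M, v) := by
    rw [Finset.sum_image (fun x _ y _ h => g.injective h)]
    exact (map_sum (AddMonoidHom.mk' g hgadd) _ M).symm
  constructor <;> rintro ⟨h1, h2, h3⟩
  · refine ⟨?_, ?_, ?_⟩
    · rwa [Finset.card_image_of_injective _ g.injective] at h1
    · intro hm; exact h2 (by rw [← hg0]; exact Finset.mem_image_of_mem g hm)
    · rw [hgh] at h3
      exact g.injective (h3.trans hg0.symm)
  · refine ⟨?_, ?_, ?_⟩
    · rwa [Finset.card_image_of_injective _ g.injective]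
    · intro hm
      obtain ⟨x, hx, hgx⟩ := Finset.mem_image.mp hm
      have : x = 0 := g.injective (hgx.trans hg0.symm)
      exact h2 (this ▸ hx)
    · rw [hgh, h3, hg0]

include hg0 hgadd in
lemma fanoIndex_conj (δ : Equiv.Perm V2) :
    fanoIndex ((g.trans δ).trans g.symm) = fanoIndex δ := by
  unfold fanoIndex
  apply Finset.card_bij (fun L _ => L.image g)
  · intro L hL
    simp only [Finset.mem_filter, Finset.mem_univ, true_and] at hL ⊢
    obtain ⟨h1, h2⟩ := hL
    refine ⟨(line_image g hg0 hgadd L).mpr h1, ?_⟩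
    have : (L.image g).image δ = (L.image ((g.trans δ).trans g.symm)).image g := by
      rw [Finset.image_image, Finset.image_image]
      apply Finset.image_congr
      intro x _
      simp [Equiv.trans]
    rw [this]
    exact (line_image g hg0 hgadd _).mpr h2
  · intro L hL L' hL' h
    exact Finset.image_injective g.injective h
  · intro M hM
    refine ⟨M.image g.symm, ?_, ?_⟩
    · simp only [Finset.mem_filter, Finset.mem_univ, true_and] at hM ⊢
      obtain ⟨h1, h2⟩ := hM
      have hMg : (M.image g.symm).image g = M := by
        rw [Finset.image_image]; simp
      constructor
      · rw [← line_image g hg0 hgadd, hMg]; exact h1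
      · rw [← line_image g hg0 hgadd]
        have : ((M.image g.symm).image ((g.trans δ).trans g.symm)).image g
            = M.image δ := by
          rw [Finset.image_image, Finset.image_image]
          apply Finset.image_congr
          intro x _
          simp [Equiv.trans]
        rw [this]; exact h2
    · rw [Finset.image_image]; simp
end conj

lemma line_of_triple (x y z : V2) (hxy : x ≠ y) (hxz : x ≠ z) (hyz : y ≠ z)
    (h0x : x ≠ 0) (h0y : y ≠ 0) (h0z : z ≠ 0) (hs : x + y + z = 0) :
    IsFanoLine {x, y, z} := by
  refine ⟨?_, ?_, ?_⟩
  · rw [Finset.card_insert_of_notMem (by simp [hxy, hxz]),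
      Finset.card_insert_of_notMem (by simp [hyz]), Finset.card_singleton]
  · simp [Ne.symm h0x, Ne.symm h0y, Ne.symm h0z]
  · rw [Finset.sum_insert (by simp [hxy, hxz]), Finset.sum_insert (by simp [hyz]),
      Finset.sum_singleton]
    linear_combination hs

section main
variable (a b c : V2) (δ : Equiv.Perm V2) (hδ0 : δ 0 = 0) (hda : δ a = a) (hdb : δ b = b)
  (hdc : δ c = c) (hdd : δ (a + b + c) = a + b + c)

include hδ0 hda hdb hdc hdd in
lemma conj_eq (hbij : Function.Bijective (fcomb a b c)) (π : Equiv.Perm V2)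
    (hπ0 : π ![0,0,0] = ![0,0,0]) (hπa : π ![1,0,0] = ![1,0,0]) (hπb : π ![0,1,0] = ![0,1,0])
    (hπc : π ![0,0,1] = ![0,0,1]) (hπd : π ![1,1,1] = ![1,1,1])
    (h1 : δ (a + b) = fcomb a b c (π ![1,1,0]))
    (h2 : δ (a + c) = fcomb a b c (π ![1,0,1]))
    (h3 : δ (b + c) = fcomb a b c (π ![0,1,1])) :
    ((Equiv.ofBijective _ hbij).trans δ).trans (Equiv.ofBijective _ hbij).symm = π := by
  have key : ∀ w : V2, δ (fcomb a b c w) = fcomb a b c (π w) := by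
    intro w
    rcases zcases w with hz|hz|hz|hz|hz|hz|hz|hz <;> subst hz
    · rw [fv0, hπ0, fv0]; exact hδ0
    · rw [fva, hπa, fva]; exact hda
    · rw [fvb, hπb, fvb]; exact hdb
    · rw [fvc, hπc, fvc]; exact hdc
    · rw [fvab]; exact h1
    · rw [fvac]; exact h2
    · rw [fvbc]; exact h3
    · rw [fvabc, hπd, fvabc]; exact hdd
  apply Equiv.ext
  intro z
  show (Equiv.ofBijective _ hbij).symm (δ ((Equiv.ofBijective _ hbij) z)) = π z
  rw [show ((Equiv.ofBijective _ hbij) z : V2) = fcomb a b c z from rfl, key z]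
  exact Equiv.symm_apply_apply _ _

variable (ha : a ≠ 0) (hb : b ≠ 0) (hc : c ≠ 0)
  (hab : a + b ≠ 0) (hac : a + c ≠ 0) (hbc : b + c ≠ 0) (habc : a + b + c ≠ 0)

include ha hb hc hab hac hbc habc hδ0 hda hdb hdc hdd in
theorem fano_aux :
    IsFanoLine (fanoPoints \ {a, b, c, a + b + c}) ∧
    (fanoPoints \ {a, b, c, a + b + c}).image δ = fanoPoints \ {a, b, c, a + b + c} ∧
    ((∀ x ∈ fanoPoints \ {a, b, c, a + b + c}, δ x = x) → δ = 1) ∧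
    ((∃ u ∈ fanoPoints \ {a, b, c, a + b + c}, ∃ v ∈ fanoPoints \ {a, b, c, a + b + c},
        u ≠ v ∧ δ u = v ∧ δ v = u ∧
        ∀ x ∈ fanoPoints \ {a, b, c, a + b + c}, x ≠ u → x ≠ v → δ x = x) → fanoIndex δ = 3) ∧
    ((∀ x ∈ fanoPoints \ {a, b, c, a + b + c}, δ x ≠ x) → fanoIndex δ = 1) := by
  have n_a_b : a ≠ b := fun h => hab (by linear_combination h + hself b)
  have n_a_c : a ≠ c := fun h => hac (by linear_combination h + hself c)
  have n_a_ab : a ≠ a + b := fun h => hb (by linear_combination h + hself b)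
  have n_a_ac : a ≠ a + c := fun h => hc (by linear_combination h + hself c)
  have n_a_bc : a ≠ b + c := fun h => habc (by linear_combination h + hself b + hself c)
  have n_a_abc : a ≠ a + b + c := fun h => hbc (by linear_combination h + hself b + hself c)
  have n_b_c : b ≠ c := fun h => hbc (by linear_combination h + hself c)
  have n_b_ab : b ≠ a + b := fun h => ha (by linear_combination h + hself a)
  have n_b_ac : b ≠ a + c := fun h => habc (by linear_combination h + hself a + hself c)
  have n_b_bc : b ≠ b + c := fun h => hc (by linear_combination h + hself c)
  have n_b_abc : b ≠ a + b + c := fun h => hac (by linear_combination h + hself a + hself c)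
  have n_c_ab : c ≠ a + b := fun h => habc (by linear_combination h + hself a + hself b)
  have n_c_ac : c ≠ a + c := fun h => ha (by linear_combination h + hself a)
  have n_c_bc : c ≠ b + c := fun h => hb (by linear_combination h + hself b)
  have n_c_abc : c ≠ a + b + c := fun h => hab (by linear_combination h + hself a + hself b)
  have n_ab_ac : a + b ≠ a + c := fun h => hbc (by linear_combination h + hself c)
  have n_ab_bc : a + b ≠ b + c := fun h => hac (by linear_combination h + hself c)
  have n_ab_abc : a + b ≠ a + b + c := fun h => hc (by linear_combination h + hself c)
  have n_ac_bc : a + c ≠ b + c := fun h => hab (by linear_combination h + hself b)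
  have n_ac_abc : a + c ≠ a + b + c := fun h => hb (by linear_combination h + hself b)
  have n_bc_abc : b + c ≠ a + b + c := fun h => ha (by linear_combination h + hself a)

  have hbij := fcomb_bij a b c ha hb hc hab hac hbc habc
  set Lset := fanoPoints \ {a, b, c, a + b + c} with hLdef
  have hLmem : ∀ x : V2, x ∈ Lset ↔
      x ≠ 0 ∧ x ≠ a ∧ x ≠ b ∧ x ≠ c ∧ x ≠ a + b + c := by
    intro x
    simp only [hLdef, Finset.mem_sdiff, fanoPoints, Finset.mem_filter, Finset.mem_univ,
      true_and, Finset.mem_insert, Finset.mem_singleton, not_or]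
  have hL : Lset = {a + b, a + c, b + c} := by
    ext x
    rw [hLmem]
    rcases vcases a b c ha hb hc hab hac hbc habc x with rfl|rfl|rfl|rfl|rfl|rfl|rfl|rfl <;>
      simp [ha, hb, hc, hab, hac, hbc, habc, Ne.symm ha, Ne.symm hb, Ne.symm hc, Ne.symm hab, Ne.symm hac, Ne.symm hbc, Ne.symm habc, n_a_b, n_a_c, n_a_ab, n_a_ac, n_a_bc, n_a_abc, n_b_c, n_b_ab, n_b_ac, n_b_bc, n_b_abc, n_c_ab, n_c_ac, n_c_bc, n_c_abc, n_ab_ac, n_ab_bc, n_ab_abc, n_ac_bc, n_ac_abc, n_bc_abc, Ne.symm n_a_b, Ne.symm n_a_c, Ne.symm n_a_ab, Ne.symm n_a_ac, Ne.symm n_a_bc, Ne.symm n_a_abc, Ne.symm n_b_c, Ne.symm n_b_ab, Ne.symm n_b_ac, Ne.symm n_b_bc, Ne.symm n_b_abc, Ne.symm n_c_ab, Ne.symm n_c_ac, Ne.symm n_c_bc, Ne.symm n_c_abc, Ne.symm n_ab_ac, Ne.symm n_ab_bc, Ne.symm n_ab_abc, Ne.symm n_ac_bc, Ne.symm n_ac_abc,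 Ne.symm n_bc_abc]
  have hmem_ab : a + b ∈ Lset := by rw [hL]; simp
  have hmem_ac : a + c ∈ Lset := by rw [hL]; simp
  have hmem_bc : b + c ∈ Lset := by rw [hL]; simp
  have h_img : Lset.image δ = Lset := by
    apply Finset.eq_of_subset_of_card_le
    · intro y hy
      obtain ⟨x, hx, rfl⟩ := Finset.mem_image.mp hy
      obtain ⟨hx0, hxa, hxb, hxc, hxd⟩ := (hLmem x).mp hx
      rw [hLmem]
      exact ⟨fun h => hx0 (δ.injective (h.trans hδ0.symm)),
        fun h => hxa (δ.injective (h.trans hda.symm)),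
        fun h => hxb (δ.injective (h.trans hdb.symm)),
        fun h => hxc (δ.injective (h.trans hdc.symm)),
        fun h => hxd (δ.injective (h.trans hdd.symm))⟩
    · exact le_of_eq (Finset.card_image_of_injective _ δ.injective).symm
  have h_line : IsFanoLine Lset := by
    rw [hL]
    refine ⟨?_, ?_, ?_⟩
    · rw [Finset.card_insert_of_notMem (by simp [n_ab_ac, n_ab_bc]),
        Finset.card_insert_of_notMem (by simp [n_ac_bc]), Finset.card_singleton]
    · simp [Ne.symm hab, Ne.symm hac, Ne.symm hbc]
    · rw [Finset.sum_insert (by simp [n_ab_ac, n_ab_bc]),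
        Finset.sum_insert (by simp [n_ac_bc]), Finset.sum_singleton]
      linear_combination hself a + hself b + hself c
  refine ⟨h_line, h_img, ?_, ?_, ?_⟩
  · -- identity case
    intro hid
    apply Equiv.ext
    intro x
    show δ x = x
    rcases vcases a b c ha hb hc hab hac hbc habc x with rfl|rfl|rfl|rfl|rfl|rfl|rfl|rfl
    · exact hδ0
    · exact hda
    · exact hdb
    · exact hdc
    · exact hid _ hmem_ab
    · exact hid _ hmem_ac
    · exact hid _ hmem_bc
    · exact hdd
  · -- transposition case
    rintro ⟨u, hu, v, hv, huv, huvf, hvuf, hother⟩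
    rw [hL, Finset.mem_insert, Finset.mem_insert, Finset.mem_singleton] at hu hv
    rcases hu with rfl|rfl|rfl <;> rcases hv with rfl|rfl|rfl
    · exact absurd rfl huv
    · have hw : δ (b + c) = b + c :=
        hother _ hmem_bc (Ne.symm n_ab_bc) (Ne.symm n_ac_bc)
      have hcj := conj_eq a b c δ hδ0 hda hdb hdc hdd hbij (Equiv.swap ![1,1,0] ![1,0,1] : Equiv.Perm V2)
        (by decide) (by decide) (by decide) (by decide) (by decide)
        (by rw [show (Equiv.swap ![1,1,0] ![1,0,1] : Equiv.Perm V2) ![1,1,0] = ![1,0,1] from by decide, fvac]; exact huvf)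
        (by rw [show (Equiv.swap ![1,1,0] ![1,0,1] : Equiv.Perm V2) ![1,0,1] = ![1,1,0] from by decide, fvab]; exact hvuf)
        (by rw [show (Equiv.swap ![1,1,0] ![1,0,1] : Equiv.Perm V2) ![0,1,1] = ![0,1,1] from by decide, fvbc]; exact hw)
      have hidx := fanoIndex_conj (Equiv.ofBijective _ hbij) (fcomb_zero a b c) (fcomb_add a b c) δ
      rw [hcj] at hidx
      rw [← hidx]
      decide
    · have hw : δ (a + c) = a + c :=
        hother _ hmem_ac (Ne.symm n_ab_ac) n_ac_bc
      have hcj := conj_eq a b c δ hδ0 hda hdb hdc hdd hbij (Equiv.swap ![1,1,0] ![0,1,1] : Equiv.Perm V2)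
        (by decide) (by decide) (by decide) (by decide) (by decide)
        (by rw [show (Equiv.swap ![1,1,0] ![0,1,1] : Equiv.Perm V2) ![1,1,0] = ![0,1,1] from by decide, fvbc]; exact huvf)
        (by rw [show (Equiv.swap ![1,1,0] ![0,1,1] : Equiv.Perm V2) ![1,0,1] = ![1,0,1] from by decide, fvac]; exact hw)
        (by rw [show (Equiv.swap ![1,1,0] ![0,1,1] : Equiv.Perm V2) ![0,1,1] = ![1,1,0] from by decide, fvab]; exact hvuf)
      have hidx := fanoIndex_conj (Equiv.ofBijective _ hbij) (fcomb_zero a b c) (fcomb_add a b c) δ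
      rw [hcj] at hidx
      rw [← hidx]
      decide
    · have hw : δ (b + c) = b + c :=
        hother _ hmem_bc (Ne.symm n_ac_bc) (Ne.symm n_ab_bc)
      have hcj := conj_eq a b c δ hδ0 hda hdb hdc hdd hbij (Equiv.swap ![1,0,1] ![1,1,0] : Equiv.Perm V2)
        (by decide) (by decide) (by decide) (by decide) (by decide)
        (by rw [show (Equiv.swap ![1,0,1] ![1,1,0] : Equiv.Perm V2) ![1,1,0] = ![1,0,1] from by decide, fvac]; exact hvuf)
        (by rw [show (Equiv.swap ![1,0,1] ![1,1,0] : Equiv.Perm V2) ![1,0,1] = ![1,1,0] from by decide, fvab]; exact huvf)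
        (by rw [show (Equiv.swap ![1,0,1] ![1,1,0] : Equiv.Perm V2) ![0,1,1] = ![0,1,1] from by decide, fvbc]; exact hw)
      have hidx := fanoIndex_conj (Equiv.ofBijective _ hbij) (fcomb_zero a b c) (fcomb_add a b c) δ
      rw [hcj] at hidx
      rw [← hidx]
      decide
    · exact absurd rfl huv
    · have hw : δ (a + b) = a + b :=
        hother _ hmem_ab n_ab_ac n_ab_bc
      have hcj := conj_eq a b c δ hδ0 hda hdb hdc hdd hbij (Equiv.swap ![1,0,1] ![0,1,1] : Equiv.Perm V2)
        (by decide) (by decide) (by decide) (by decide) (by decide)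
        (by rw [show (Equiv.swap ![1,0,1] ![0,1,1] : Equiv.Perm V2) ![1,1,0] = ![1,1,0] from by decide, fvab]; exact hw)
        (by rw [show (Equiv.swap ![1,0,1] ![0,1,1] : Equiv.Perm V2) ![1,0,1] = ![0,1,1] from by decide, fvbc]; exact huvf)
        (by rw [show (Equiv.swap ![1,0,1] ![0,1,1] : Equiv.Perm V2) ![0,1,1] = ![1,0,1] from by decide, fvac]; exact hvuf)
      have hidx := fanoIndex_conj (Equiv.ofBijective _ hbij) (fcomb_zero a b c) (fcomb_add a b c) δ
      rw [hcj] at hidx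
      rw [← hidx]
      decide
    · have hw : δ (a + c) = a + c :=
        hother _ hmem_ac n_ac_bc (Ne.symm n_ab_ac)
      have hcj := conj_eq a b c δ hδ0 hda hdb hdc hdd hbij (Equiv.swap ![0,1,1] ![1,1,0] : Equiv.Perm V2)
        (by decide) (by decide) (by decide) (by decide) (by decide)
        (by rw [show (Equiv.swap ![0,1,1] ![1,1,0] : Equiv.Perm V2) ![1,1,0] = ![0,1,1] from by decide, fvbc]; exact hvuf)
        (by rw [show (Equiv.swap ![0,1,1] ![1,1,0] : Equiv.Perm V2) ![1,0,1] = ![1,0,1] from by decide, fvac]; exact hw)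
        (by rw [show (Equiv.swap ![0,1,1] ![1,1,0] : Equiv.Perm V2) ![0,1,1] = ![1,1,0] from by decide, fvab]; exact huvf)
      have hidx := fanoIndex_conj (Equiv.ofBijective _ hbij) (fcomb_zero a b c) (fcomb_add a b c) δ
      rw [hcj] at hidx
      rw [← hidx]
      decide
    · have hw : δ (a + b) = a + b :=
        hother _ hmem_ab n_ab_bc n_ab_ac
      have hcj := conj_eq a b c δ hδ0 hda hdb hdc hdd hbij (Equiv.swap ![0,1,1] ![1,0,1] : Equiv.Perm V2)
        (by decide) (by decide) (by decide) (by decide) (by decide)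
        (by rw [show (Equiv.swap ![0,1,1] ![1,0,1] : Equiv.Perm V2) ![1,1,0] = ![1,1,0] from by decide, fvab]; exact hw)
        (by rw [show (Equiv.swap ![0,1,1] ![1,0,1] : Equiv.Perm V2) ![1,0,1] = ![0,1,1] from by decide, fvbc]; exact hvuf)
        (by rw [show (Equiv.swap ![0,1,1] ![1,0,1] : Equiv.Perm V2) ![0,1,1] = ![1,0,1] from by decide, fvac]; exact huvf)
      have hidx := fanoIndex_conj (Equiv.ofBijective _ hbij) (fcomb_zero a b c) (fcomb_add a b c) δ
      rw [hcj] at hidx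
      rw [← hidx]
      decide
    · exact absurd rfl huv
  · -- 3-cycle case
    intro hmove
    have himg : ∀ x ∈ Lset, δ x ∈ Lset := by
      intro x hx
      rw [← h_img]
      exact Finset.mem_image_of_mem δ hx
    have m1 := himg _ hmem_ab
    have m2 := himg _ hmem_ac
    have m3 := himg _ hmem_bc
    rw [hL, Finset.mem_insert, Finset.mem_insert, Finset.mem_singleton] at m1 m2 m3
    rcases m1 with e1|e1|e1
    · exact absurd e1 (hmove _ hmem_ab)
    · -- δ (a+b) = a + c
      rcases m2 with e2|e2|e2
      · -- δ (a+c) = a+b : then δ (b+c) impossible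
        rcases m3 with e3|e3|e3
        · exact absurd (δ.injective (e3.trans e2.symm)) (Ne.symm n_ac_bc)
        · exact absurd (δ.injective (e3.trans e1.symm)) (Ne.symm n_ab_bc)
        · exact absurd e3 (hmove _ hmem_bc)
      · exact absurd e2 (hmove _ hmem_ac)
      · -- δ (a+c) = b+c ; then δ (b+c) = a+b
        have e3 : δ (b + c) = a + b := by
          rcases m3 with e3|e3|e3
          · exact e3
          · exact absurd (δ.injective (e3.trans e1.symm)) (Ne.symm n_ab_bc)
          · exact absurd e3 (hmove _ hmem_bc)
        have hcj := conj_eq a b c δ hδ0 hda hdb hdc hdd hbij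
          ((Equiv.swap ![1,1,0] ![1,0,1]).trans (Equiv.swap ![1,1,0] ![0,1,1]))
          (by decide) (by decide) (by decide) (by decide) (by decide)
          (by rw [show ((Equiv.swap ![1,1,0] ![1,0,1]).trans (Equiv.swap ![1,1,0] ![0,1,1]) : Equiv.Perm V2) ![1,1,0] = ![1,0,1] from by decide, fvac]; exact e1)
          (by rw [show ((Equiv.swap ![1,1,0] ![1,0,1]).trans (Equiv.swap ![1,1,0] ![0,1,1]) : Equiv.Perm V2) ![1,0,1] = ![0,1,1] from by decide, fvbc]; exact e2)
          (by rw [show ((Equiv.swap ![1,1,0] ![1,0,1]).trans (Equiv.swap ![1,1,0] ![0,1,1]) : Equiv.Perm V2) ![0,1,1] = ![1,1,0] from by decide, fvab]; exact e3)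
        have hidx := fanoIndex_conj (Equiv.ofBijective _ hbij) (fcomb_zero a b c) (fcomb_add a b c) δ
        rw [hcj] at hidx
        rw [← hidx]
        decide
    · -- δ (a+b) = b + c
      have e2 : δ (a + c) = a + b := by
        rcases m2 with e2|e2|e2
        · exact e2
        · exact absurd e2 (hmove _ hmem_ac)
        · exact absurd (δ.injective (e2.trans e1.symm)) (Ne.symm n_ab_ac)
      have e3 : δ (b + c) = a + c := by
        rcases m3 with e3|e3|e3
        · exact absurd (δ.injective (e3.trans e2.symm)) (Ne.symm n_ac_bc)
        · exact e3
        · exact absurd e3 (hmove _ hmem_bc)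
      have hcj := conj_eq a b c δ hδ0 hda hdb hdc hdd hbij
        ((Equiv.swap ![1,1,0] ![1,0,1]).trans (Equiv.swap ![1,0,1] ![0,1,1]))
        (by decide) (by decide) (by decide) (by decide) (by decide)
        (by rw [show ((Equiv.swap ![1,1,0] ![1,0,1]).trans (Equiv.swap ![1,0,1] ![0,1,1]) : Equiv.Perm V2) ![1,1,0] = ![0,1,1] from by decide, fvbc]; exact e1)
        (by rw [show ((Equiv.swap ![1,1,0] ![1,0,1]).trans (Equiv.swap ![1,0,1] ![0,1,1]) : Equiv.Perm V2) ![1,0,1] = ![1,1,0] from by decide, fvab]; exact e2)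
        (by rw [show ((Equiv.swap ![1,1,0] ![1,0,1]).trans (Equiv.swap ![1,0,1] ![0,1,1]) : Equiv.Perm V2) ![0,1,1] = ![1,0,1] from by decide, fvac]; exact e3)
      have hidx := fanoIndex_conj (Equiv.ofBijective _ hbij) (fcomb_zero a b c) (fcomb_add a b c) δ
      rw [hcj] at hidx
      rw [← hidx]
      decide

end main

theorem stmt_14 (P : Fin 4 → (Fin 3 → ZMod 2)) (hP : IsFanoSimplex P)
    (δ : Equiv.Perm (Fin 3 → ZMod 2)) (hδ0 : δ 0 = 0)
    (hfix : ∀ i, δ (P i) = P i) :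
    let L : Finset (Fin 3 → ZMod 2) :=
      fanoPoints \ {P 0, P 1, P 2, P 3}
    IsFanoLine L ∧ L.image δ = L ∧
    ((∀ x ∈ L, δ x = x) → δ = 1) ∧
    ((∃ a ∈ L, ∃ b ∈ L, a ≠ b ∧ δ a = b ∧ δ b = a ∧
        ∀ x ∈ L, x ≠ a → x ≠ b → δ x = x) → fanoIndex δ = 3) ∧
    ((∀ x ∈ L, δ x ≠ x) → fanoIndex δ = 1) := by
  obtain ⟨hnz, hinj, hncol⟩ := hP
  have ne01 : P 0 ≠ P 1 := fun h => absurd (hinj h) (by decide)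
  have ne02 : P 0 ≠ P 2 := fun h => absurd (hinj h) (by decide)
  have ne03 : P 0 ≠ P 3 := fun h => absurd (hinj h) (by decide)
  have ne12 : P 1 ≠ P 2 := fun h => absurd (hinj h) (by decide)
  have ne13 : P 1 ≠ P 3 := fun h => absurd (hinj h) (by decide)
  have ne23 : P 2 ≠ P 3 := fun h => absurd (hinj h) (by decide)
  have hab : P 0 + P 1 ≠ 0 := fun h => ne01 (heq_of_add _ _ h)
  have hac : P 0 + P 2 ≠ 0 := fun h => ne02 (heq_of_add _ _ h)
  have hbc : P 1 + P 2 ≠ 0 := fun h => ne12 (heq_of_add _ _ h)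
  have habc : P 0 + P 1 + P 2 ≠ 0 := fun h =>
    hncol 0 1 2 (by decide) (by decide) (by decide)
      (line_of_triple _ _ _ ne01 ne02 ne12 (hnz 0) (hnz 1) (hnz 2) h)
  have hd : P 3 = P 0 + P 1 + P 2 := by
    rcases vcases (P 0) (P 1) (P 2) (hnz 0) (hnz 1) (hnz 2) hab hac hbc habc (P 3)
      with h|h|h|h|h|h|h|h
    · exact absurd h (hnz 3)
    · exact absurd (hinj h) (by decide)
    · exact absurd (hinj h) (by decide)
    · exact absurd (hinj h) (by decide)
    · exact absurd
        (line_of_triple (P 0) (P 1) (P 3) ne01 ne03 ne13 (hnz 0) (hnz 1) (hnz 3)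
          (by linear_combination h + hself (P 0) + hself (P 1)))
        (hncol 0 1 3 (by decide) (by decide) (by decide))
    · exact absurd
        (line_of_triple (P 0) (P 2) (P 3) ne02 ne03 ne23 (hnz 0) (hnz 2) (hnz 3)
          (by linear_combination h + hself (P 0) + hself (P 2)))
        (hncol 0 2 3 (by decide) (by decide) (by decide))
    · exact absurd
        (line_of_triple (P 1) (P 2) (P 3) ne12 ne13 ne23 (hnz 1) (hnz 2) (hnz 3)
          (by linear_combination h + hself (P 1) + hself (P 2)))
        (hncol 1 2 3 (by decide) (by decide) (by decide))
    · exact h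
  intro L
  have main := fano_aux (P 0) (P 1) (P 2) δ hδ0 (hfix 0) (hfix 1) (hfix 2)
    (by rw [← hd]; exact hfix 3) (hnz 0) (hnz 1) (hnz 2) hab hac hbc habc
  rw [← hd] at main
  exact main
end

section
/- For every bijective transformation δ of the Fano plane, the number of lines mapped by δ onto lines belongs to {0, 1, 3, 7}. -/
set_option maxRecDepth 10000

/- ### Auxiliary material -/

abbrev FanoV := Fin 3 → ZMod 2

/-- The line with "normal vector" `w`. -/
def fanoLineOf (w : FanoV) : Finset FanoV :=
  fanoPoints.filter (fun v => dotProduct w v = 0)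

/-- The additive map whose kernel indexes the preserved lines. -/
def fanoT (δ : Equiv.Perm FanoV) (w : FanoV) : FanoV :=
  ∑ v : FanoV, (dotProduct w v) • δ v

lemma fano_d1 : ∀ w ∈ fanoPoints, IsFanoLine (fanoLineOf w) := by decide
lemma fano_d2 : ∀ w ∈ fanoPoints, ∀ w' ∈ fanoPoints,
    fanoLineOf w = fanoLineOf w' → w = w' := by decide
lemma fano_d3 : ∀ L : Finset FanoV, IsFanoLine L → ∃ w ∈ fanoPoints, fanoLineOf w = L := by
  decide

lemma fano_zmod2 (d : ZMod 2) : d = 0 ∨ d = 1 := by revert d; decide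

lemma fano_neg (x : FanoV) : -x = x := by
  funext i
  have : ∀ d : ZMod 2, -d = d := by decide
  simp [this]

lemma fanoT_add (δ : Equiv.Perm FanoV) (w w' : FanoV) :
    fanoT δ (w + w') = fanoT δ w + fanoT δ w' := by
  unfold fanoT
  rw [← Finset.sum_add_distrib]
  refine Finset.sum_congr rfl fun v _ => ?_
  rw [add_dotProduct, add_smul]

lemma fanoT_zero (δ : Equiv.Perm FanoV) : fanoT δ 0 = 0 := by
  unfold fanoT
  refine Finset.sum_eq_zero fun v _ => ?_
  rw [zero_dotProduct, zero_smul]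

lemma fano_sum_points (δ : Equiv.Perm FanoV) (hδ0 : δ 0 = 0) :
    ∑ v ∈ fanoPoints, δ v = 0 := by
  have hinj : Function.Injective δ := δ.injective
  have himg : fanoPoints.image δ = fanoPoints := by
    apply Finset.eq_of_subset_of_card_le
    · intro u hu
      simp only [Finset.mem_image] at hu
      obtain ⟨v, hv, rfl⟩ := hu
      simp only [fanoPoints, Finset.mem_filter, Finset.mem_univ, true_and] at hv ⊢
      intro h
      exact hv (hinj (h.trans hδ0.symm))
    · rw [Finset.card_image_of_injective _ hinj]
  have h1 : ∑ u ∈ fanoPoints.image δ, u = ∑ v ∈ fanoPoints, δ v :=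
    Finset.sum_image (fun a _ b _ h => hinj h)
  rw [← h1, himg]
  decide

lemma fanoT_eq (δ : Equiv.Perm FanoV) (hδ0 : δ 0 = 0) (w : FanoV) :
    fanoT δ w = ∑ v ∈ fanoLineOf w, δ v := by
  have h1 : fanoT δ w = ∑ v ∈ Finset.univ.filter (fun v => dotProduct w v = 1), δ v := by
    rw [Finset.sum_filter]
    refine Finset.sum_congr rfl fun v _ => ?_
    rcases fano_zmod2 (dotProduct w v) with h | h <;> rw [h] <;> simp
  have h2 : Finset.univ.filter (fun v : FanoV => dotProduct w v = 1)
      = fanoPoints.filter (fun v => dotProduct w v = 1) := by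
    simp only [fanoPoints, Finset.filter_filter]
    refine Finset.filter_congr fun v _ => ?_
    constructor
    · intro h
      refine ⟨fun hv0 => ?_, h⟩
      rw [hv0, dotProduct_zero] at h
      exact absurd h (by decide)
    · exact fun h => h.2
  have h3 : (∑ v ∈ fanoLineOf w, δ v)
        + ∑ v ∈ fanoPoints.filter (fun v => dotProduct w v = 1), δ v = 0 := by
    have hfc : fanoPoints.filter (fun v => ¬ dotProduct w v = 0)
        = fanoPoints.filter (fun v => dotProduct w v = 1) := by
      refine Finset.filter_congr fun v _ => ?_
      rcases fano_zmod2 (dotProduct w v) with h | h <;> rw [h] <;> simp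
    rw [fanoLineOf, ← hfc,
      Finset.sum_filter_add_sum_filter_not fanoPoints (fun v => dotProduct w v = 0) δ]
    exact fano_sum_points δ hδ0
  rw [h1, h2]
  have := eq_neg_of_add_eq_zero_right h3
  rw [this, fano_neg]

lemma fano_image_line (δ : Equiv.Perm FanoV) (hδ0 : δ 0 = 0) (L : Finset FanoV)
    (hL : IsFanoLine L) : IsFanoLine (L.image δ) ↔ ∑ v ∈ L, δ v = 0 := by
  have hinj : Function.Injective δ := δ.injective
  have hsum : ∑ u ∈ L.image δ, u = ∑ v ∈ L, δ v :=
    Finset.sum_image (fun a _ b _ h => hinj h)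
  constructor
  · intro h
    rw [← hsum]
    exact h.2.2
  · intro h
    refine ⟨?_, ?_, by rw [hsum]; exact h⟩
    · rw [Finset.card_image_of_injective _ hinj]; exact hL.1
    · intro h0
      simp only [Finset.mem_image] at h0
      obtain ⟨v, hv, hv0⟩ := h0
      have : v = 0 := hinj (hv0.trans hδ0.symm)
      exact hL.2.1 (this ▸ hv)

theorem stmt_15 (δ : Equiv.Perm (Fin 3 → ZMod 2)) (hδ0 : δ 0 = 0) :
    fanoIndex δ ∈ ({0, 1, 3, 7} : Finset ℕ) := by
  classical
  -- Step 1: preserved lines counted by vanishing of the sum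
  have step1 : fanoIndex δ
      = (Finset.univ.filter
          (fun L : Finset FanoV => IsFanoLine L ∧ ∑ v ∈ L, δ v = 0)).card := by
    unfold fanoIndex
    congr 1
    refine Finset.filter_congr fun L _ => ?_
    constructor
    · rintro ⟨h1, h2⟩
      exact ⟨h1, (fano_image_line δ hδ0 L h1).mp h2⟩
    · rintro ⟨h1, h2⟩
      exact ⟨h1, (fano_image_line δ hδ0 L h1).mpr h2⟩
  -- Step 2: bijection with nonzero kernel vectors of `fanoT δ`
  have step2 : (fanoPoints.filter (fun w => fanoT δ w = 0)).card
      = (Finset.univ.filter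
          (fun L : Finset FanoV => IsFanoLine L ∧ ∑ v ∈ L, δ v = 0)).card := by
    refine Finset.card_bij (fun w _ => fanoLineOf w) ?_ ?_ ?_
    · intro w hw
      rw [Finset.mem_filter] at hw
      refine Finset.mem_filter.mpr ⟨Finset.mem_univ _, fano_d1 w hw.1, ?_⟩
      rw [← fanoT_eq δ hδ0]; exact hw.2
    · intro w1 hw1 w2 hw2 h
      exact fano_d2 w1 (Finset.mem_filter.mp hw1).1 w2 (Finset.mem_filter.mp hw2).1 h
    · intro L hL
      rw [Finset.mem_filter] at hL
      obtain ⟨w, hw, hwL⟩ := fano_d3 L hL.2.1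
      refine ⟨w, ?_, hwL⟩
      refine Finset.mem_filter.mpr ⟨hw, ?_⟩
      rw [fanoT_eq δ hδ0, hwL]
      exact hL.2.2
  -- Step 3: the kernel is an additive subgroup, so its cardinality divides 8
  let K : AddSubgroup FanoV :=
    { carrier := {w | fanoT δ w = 0}
      zero_mem' := fanoT_zero δ
      add_mem' := fun {a b} ha hb => by
        simp only [Set.mem_setOf_eq] at *
        rw [fanoT_add, ha, hb, add_zero]
      neg_mem' := fun {a} ha => by rw [Set.mem_setOf_eq, fano_neg]; exact ha }
  have hcardK : Nat.card K = (Finset.univ.filter (fun w => fanoT δ w = 0)).card := by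
    have e : Nat.card K = Nat.card {w : FanoV // fanoT δ w = 0} :=
      Nat.card_congr (Equiv.subtypeEquivRight (fun w => Iff.rfl))
    rw [e, Nat.card_eq_fintype_card, Fintype.card_subtype]
  have hker : (Finset.univ.filter (fun w : FanoV => fanoT δ w = 0)).card
      = (fanoPoints.filter (fun w => fanoT δ w = 0)).card + 1 := by
    have h0notin : (0 : FanoV) ∉ fanoPoints.filter (fun w => fanoT δ w = 0) := by
      simp [fanoPoints]
    have : Finset.univ.filter (fun w : FanoV => fanoT δ w = 0)
        = insert 0 (fanoPoints.filter (fun w => fanoT δ w = 0)) := by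
      ext w
      simp only [Finset.mem_filter, Finset.mem_univ, true_and, Finset.mem_insert,
        fanoPoints]
      constructor
      · intro h
        by_cases hw : w = 0
        · exact Or.inl hw
        · exact Or.inr ⟨by simp [hw], h⟩
      · rintro (rfl | ⟨_, h⟩)
        · exact fanoT_zero δ
        · exact h
    rw [this, Finset.card_insert_of_notMem h0notin, add_comm]
  have hdvd : Nat.card K ∣ Nat.card FanoV := AddSubgroup.card_addSubgroup_dvd_card K
  have hV : Nat.card FanoV = 8 := by
    rw [Nat.card_eq_fintype_card]; decide
  have hfinal : fanoIndex δ + 1 ∣ 8 := by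
    rw [step1, ← step2]
    have : (fanoPoints.filter (fun w => fanoT δ w = 0)).card + 1 = Nat.card K := by
      rw [hcardK, hker]
    rw [this, ← hV]
    exact hdvd
  have hle : fanoIndex δ + 1 ≤ 8 := Nat.le_of_dvd (by norm_num) hfinal
  have harith : ∀ m < 8, m + 1 ∣ 8 → m ∈ ({0, 1, 3, 7} : Finset ℕ) := by decide
  exact harith (fanoIndex δ) (by omega) hfinal
end
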